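/- For all x ∈ (0, π/2), one has exp(α − (π−2)x²/(2π)) < ((π−2)·cos x + 2)/π < exp(−(π−2)x²/(2π)), where α = (π² + 8·log(2/π) − 2π)/8, and the constants α and 0 are best possible. -/

import Mathlib

open Real Set Topology Filter

set_option maxHeartbeats 2000000

private lemma nonneg_of_deriv {f f' : ℝ → ℝ} (hd : ∀ y, HasDerivAt f (f' y) y)
    (h0 : f 0 = 0) (hf' : ∀ y, 0 ≤ y → 0 ≤ f' y) {x : ℝ} (hx : 0 ≤ x) : 0 ≤ f x := by
  have hm : MonotoneOn f (Set.Ici 0) := by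
    apply monotoneOn_of_deriv_nonneg (convex_Ici 0)
    · exact fun y _ => (hd y).continuousAt.continuousWithinAt
    · exact fun y _ => ((hd y).differentiableAt).differentiableWithinAt
    · intro y hy
      rw [interior_Ici] at hy
      rw [(hd y).deriv]
      exact hf' y (le_of_lt hy)
  calc (0:ℝ) = f 0 := h0.symm
    _ ≤ f x := hm Set.self_mem_Ici hx hx

private lemma t_s2 {x : ℝ} (hx : 0 ≤ x) : x - x ^ 3 / 6 ≤ Real.sin x := by
  have key : 0 ≤ Real.sin x - (x - x ^ 3 / 6) := by
    apply nonneg_of_deriv (f' := fun y => Real.cos y - (1 - y ^ 2 / 2)) _ (by norm_num) _ hx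
    · intro y
      have h := (Real.hasDerivAt_sin y).sub
        ((hasDerivAt_id y).sub ((hasDerivAt_pow 3 y).div_const 6))
      convert h using 1
      push_cast
      norm_num
      all_goals (try rfl)
      norm_num
      ring_nf
    · intro y _
      have := Real.one_sub_sq_div_two_le_cos (x := y)
      linarith
  linarith

private lemma t_c2 {x : ℝ} (hx : 0 ≤ x) : Real.cos x ≤ 1 - x ^ 2 / 2 + x ^ 4 / 24 := by
  have key : 0 ≤ (1 - x ^ 2 / 2 + x ^ 4 / 24) - Real.cos x := by
    apply nonneg_of_deriv (f' := fun y => (y ^ 3 / 6 - y) + Real.sin y) _ (by norm_num) _ hx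
    · intro y
      have h := (((hasDerivAt_const y (1:ℝ)).sub ((hasDerivAt_pow 2 y).div_const 2)).add
        ((hasDerivAt_pow 4 y).div_const 24)).sub (Real.hasDerivAt_cos y)
      convert h using 1
      push_cast
      norm_num
      all_goals (try rfl)
      norm_num
      ring_nf
    · intro y hy
      have := t_s2 hy
      linarith
  linarith

private lemma t_s3 {x : ℝ} (hx : 0 ≤ x) : Real.sin x ≤ x - x ^ 3 / 6 + x ^ 5 / 120 := by
  have key : 0 ≤ (x - x ^ 3 / 6 + x ^ 5 / 120) - Real.sin x := by
    apply nonneg_of_deriv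
      (f' := fun y => (1 - y ^ 2 / 2 + y ^ 4 / 24) - Real.cos y) _ (by norm_num) _ hx
    · intro y
      have h := (((hasDerivAt_id y).sub ((hasDerivAt_pow 3 y).div_const 6)).add
        ((hasDerivAt_pow 5 y).div_const 120)).sub (Real.hasDerivAt_sin y)
      convert h using 1
      push_cast
      norm_num
      all_goals (try rfl)
      norm_num
      ring_nf
    · intro y hy
      have := t_c2 hy
      linarith
  linarith

private lemma t_c3 {x : ℝ} (hx : 0 ≤ x) :
    1 - x ^ 2 / 2 + x ^ 4 / 24 - x ^ 6 / 720 ≤ Real.cos x := by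
  have key : 0 ≤ Real.cos x - (1 - x ^ 2 / 2 + x ^ 4 / 24 - x ^ 6 / 720) := by
    apply nonneg_of_deriv
      (f' := fun y => (y - y ^ 3 / 6 + y ^ 5 / 120) - Real.sin y) _ (by norm_num) _ hx
    · intro y
      have h := (Real.hasDerivAt_cos y).sub
        ((((hasDerivAt_const y (1:ℝ)).sub ((hasDerivAt_pow 2 y).div_const 2)).add
          ((hasDerivAt_pow 4 y).div_const 24)).sub ((hasDerivAt_pow 6 y).div_const 720))
      convert h using 1
      push_cast
      norm_num
      all_goals (try rfl)
      norm_num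
      ring_nf
    · intro y hy
      have := t_s3 hy
      linarith
  linarith

private lemma t_s4 {x : ℝ} (hx : 0 ≤ x) :
    x - x ^ 3 / 6 + x ^ 5 / 120 - x ^ 7 / 5040 ≤ Real.sin x := by
  have key : 0 ≤ Real.sin x - (x - x ^ 3 / 6 + x ^ 5 / 120 - x ^ 7 / 5040) := by
    apply nonneg_of_deriv
      (f' := fun y => Real.cos y - (1 - y ^ 2 / 2 + y ^ 4 / 24 - y ^ 6 / 720)) _ (by norm_num) _ hx
    · intro y
      have h := (Real.hasDerivAt_sin y).sub
        ((((hasDerivAt_id y).sub ((hasDerivAt_pow 3 y).div_const 6)).add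
          ((hasDerivAt_pow 5 y).div_const 120)).sub ((hasDerivAt_pow 7 y).div_const 5040))
      convert h using 1
      push_cast
      norm_num
      all_goals (try rfl)
      norm_num
      ring_nf
    · intro y hy
      have := t_c3 hy
      linarith
  linarith

private lemma t_c4 {x : ℝ} (hx : 0 ≤ x) :
    Real.cos x ≤ 1 - x ^ 2 / 2 + x ^ 4 / 24 - x ^ 6 / 720 + x ^ 8 / 40320 := by
  have key : 0 ≤ (1 - x ^ 2 / 2 + x ^ 4 / 24 - x ^ 6 / 720 + x ^ 8 / 40320) - Real.cos x := by
    apply nonneg_of_deriv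
      (f' := fun y => Real.sin y - (y - y ^ 3 / 6 + y ^ 5 / 120 - y ^ 7 / 5040)) _
      (by norm_num) _ hx
    · intro y
      have h := (((((hasDerivAt_const y (1:ℝ)).sub ((hasDerivAt_pow 2 y).div_const 2)).add
        ((hasDerivAt_pow 4 y).div_const 24)).sub ((hasDerivAt_pow 6 y).div_const 720)).add
        ((hasDerivAt_pow 8 y).div_const 40320)).sub (Real.hasDerivAt_cos y)
      convert h using 1
      push_cast
      norm_num
      all_goals (try rfl)
      norm_num
      ring_nf
    · intro y hy
      have := t_s4 hy
      linarith
  linarith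

private lemma exp_ub {t : ℝ} (h0 : 0 ≤ t) (h1 : t ≤ 1) :
    Real.exp t ≤ 1 + t + t ^ 2 / 2 + t ^ 3 / 6 + 5 * t ^ 4 / 96 := by
  have h := Real.exp_bound' h0 h1 (n := 4) (by norm_num)
  norm_num [Finset.sum_range_succ, Nat.factorial] at h
  linarith

private lemma upper_poly {p u : ℝ} (hp1 : (3.141592:ℝ) < p) (hp2 : p < 3.141593)
    (hu0 : 0 < u) (hu1 : u ≤ 2.467412) :
    ((p - 2) * (1 - u / 2 + u ^ 2 / 24 - u ^ 3 / 720 + u ^ 4 / 40320) + 2) *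
      (1 + (p - 2) * u / (2 * p) + ((p - 2) * u / (2 * p)) ^ 2 / 2 +
        ((p - 2) * u / (2 * p)) ^ 3 / 6 + 5 * ((p - 2) * u / (2 * p)) ^ 4 / 96) < p := by
  have hp0 : (0:ℝ) < p := by linarith
  have q2l : (9.8696002:ℝ) < p ^ 2 := by nlinarith [mul_pos (by linarith : (0:ℝ) < p - 3.141592) (by linarith : (0:ℝ) < p + 3.141592)]
  have q2u : p ^ 2 < 9.8696066 := by nlinarith [mul_pos (by linarith : (0:ℝ) < 3.141593 - p) (by linarith : (0:ℝ) < 3.141593 + p)]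
  have q3l : (31.0062573:ℝ) < p ^ 3 := by nlinarith [mul_pos (by linarith : (0:ℝ) < p - 3.141592) (by linarith : (0:ℝ) < p ^ 2 - 9.8696002)]
  have q3u : p ^ 3 < 31.0062870 := by nlinarith [mul_pos (by linarith : (0:ℝ) < 3.141593 - p) (by linarith : (0:ℝ) < p ^ 2 + 9.8696002), mul_pos (by linarith : (0:ℝ) < 9.8696066 - p ^ 2) (by linarith : (0:ℝ) < p)]
  have q4l : (97.4090099:ℝ) < p ^ 4 := by nlinarith [mul_pos (by linarith : (0:ℝ) < p - 3.141592) (by linarith : (0:ℝ) < p ^ 3 - 31.0062573)]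
  have q4u : p ^ 4 < 97.4091340 := by nlinarith [mul_pos (by linarith : (0:ℝ) < 3.141593 - p) (by linarith : (0:ℝ) < p ^ 3 + 31.0062573), mul_pos (by linarith : (0:ℝ) < 31.0062870 - p ^ 3) (by linarith : (0:ℝ) < p)]
  have q5l : (306.0193664:ℝ) < p ^ 5 := by nlinarith [mul_pos (by linarith : (0:ℝ) < p - 3.141592) (by linarith : (0:ℝ) < p ^ 4 - 97.4090099)]
  have q5u : p ^ 5 < 306.0198536 := by nlinarith [mul_pos (by linarith : (0:ℝ) < 3.141593 - p) (by linarith : (0:ℝ) < p ^ 4 + 97.4090099), mul_pos (by linarith : (0:ℝ) < 97.4091340 - p ^ 4) (by linarith : (0:ℝ) < p)]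
  have hK0 : (25862805:ℝ) ≤ (30965760) * p ^ 3 + (-25804800) * p ^ 4 + (5160960) * p ^ 5 := by linarith
  have hK1 : (-4682104:ℝ) ≤ (-20643840) * p ^ 2 + (25804800) * p ^ 3 + (-10493952) * p ^ 4 + (1376256) * p ^ 5 := by linarith
  have hK2 : (-803061:ℝ) ≤ (7096320) * p ^ 1 + (-11612160) * p ^ 2 + (6945792) * p ^ 3 + (-1781760) * p ^ 4 + (162432) * p ^ 5 := by linarith
  have hK3 : (35311:ℝ) ≤ (-3225600:ℝ) + (7203840) * p ^ 1 + (-6429696) * p ^ 2 + (2867712) * p ^ 3 + (-639360) * p ^ 4 + (57024) * p ^ 5 := by linarith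
  have hK4 : (-9563:ℝ) ≤ (268800:ℝ) + (-643328) * p ^ 1 + (616192) * p ^ 2 + (-295296) * p ^ 3 + (70816) * p ^ 4 + (-6800) * p ^ 5 := by linarith
  have hK5 : (366:ℝ) ≤ (-8960:ℝ) + (21888) * p ^ 1 + (-21376) * p ^ 2 + (10432) * p ^ 3 + (-2544) * p ^ 4 + (248) * p ^ 5 := by linarith
  have hK6 : (-15:ℝ) ≤ (160:ℝ) + (-400) * p ^ 1 + (400) * p ^ 2 + (-200) * p ^ 3 + (50) * p ^ 4 + (-5) * p ^ 5 := by linarith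
  have hBu : (0:ℝ) ≤ 2.467412 - u := by linarith
  have hRhat : (0:ℝ) < (25862805:ℝ) + (-4682104) * u ^ 1 + (-803061) * u ^ 2 + (35311) * u ^ 3 + (-9563) * u ^ 4 + (366) * u ^ 5 + (-15) * u ^ 6 := by
    nlinarith [mul_nonneg (pow_nonneg hu0.le 0) (pow_nonneg hBu 6), mul_nonneg (pow_nonneg hu0.le 1) (pow_nonneg hBu 5), mul_nonneg (pow_nonneg hu0.le 2) (pow_nonneg hBu 4), mul_nonneg (pow_nonneg hu0.le 3) (pow_nonneg hBu 3), mul_nonneg (pow_nonneg hu0.le 4) (pow_nonneg hBu 2), mul_nonneg (pow_nonneg hu0.le 5) (pow_nonneg hBu 1), mul_nonneg (pow_nonneg hu0.le 6) (pow_nonneg hBu 0)]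
  have hRR : (0:ℝ) < ((30965760) * p ^ 3 + (-25804800) * p ^ 4 + (5160960) * p ^ 5) + ((-20643840) * p ^ 2 + (25804800) * p ^ 3 + (-10493952) * p ^ 4 + (1376256) * p ^ 5) * u ^ 1 + ((7096320) * p ^ 1 + (-11612160) * p ^ 2 + (6945792) * p ^ 3 + (-1781760) * p ^ 4 + (162432) * p ^ 5) * u ^ 2 + ((-3225600) + (7203840) * p ^ 1 + (-6429696) * p ^ 2 + (2867712) * p ^ 3 + (-639360) * p ^ 4 + (57024) * p ^ 5) * u ^ 3 + ((268800) + (-643328) * p ^ 1 + (616192) * p ^ 2 + (-295296) * p ^ 3 + (70816) * p ^ 4 + (-6800) * p ^ 5) * u ^ 4 + ((-8960) + (21888) * p ^ 1 + (-21376) * p ^ 2 + (10432) * p ^ 3 + (-2544) * p ^ 4 + (248) * p ^ 5) * u ^ 5 + ((160) + (-400) * p ^ 1 + (400) * p ^ 2 + (-200) * p ^ 3 + (50) * p ^ 4 + (-5) * p ^ 5) * u ^ 6 := by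
    nlinarith [hRhat, hK0,
      mul_le_mul_of_nonneg_left hK1 (pow_nonneg hu0.le 1),
      mul_le_mul_of_nonneg_left hK2 (pow_nonneg hu0.le 2),
      mul_le_mul_of_nonneg_left hK3 (pow_nonneg hu0.le 3),
      mul_le_mul_of_nonneg_left hK4 (pow_nonneg hu0.le 4),
      mul_le_mul_of_nonneg_left hK5 (pow_nonneg hu0.le 5),
      mul_le_mul_of_nonneg_left hK6 (pow_nonneg hu0.le 6)]
  have hD : (0:ℝ) < 61931520 * p ^ 4 := by positivity
  have hid : p * (61931520 * p ^ 4) -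
      (((p - 2) * (1 - u / 2 + u ^ 2 / 24 - u ^ 3 / 720 + u ^ 4 / 40320) + 2) *
      (1 + (p - 2) * u / (2 * p) + ((p - 2) * u / (2 * p)) ^ 2 / 2 +
        ((p - 2) * u / (2 * p)) ^ 3 / 6 + 5 * ((p - 2) * u / (2 * p)) ^ 4 / 96)) *
      (61931520 * p ^ 4) = u ^ 2 * (((30965760) * p ^ 3 + (-25804800) * p ^ 4 + (5160960) * p ^ 5) + ((-20643840) * p ^ 2 + (25804800) * p ^ 3 + (-10493952) * p ^ 4 + (1376256) * p ^ 5) * u ^ 1 + ((7096320) * p ^ 1 + (-11612160) * p ^ 2 + (6945792) * p ^ 3 + (-1781760) * p ^ 4 + (162432) * p ^ 5) * u ^ 2 + ((-3225600) + (7203840) * p ^ 1 + (-6429696) * p ^ 2 + (2867712) * p ^ 3 + (-639360) * p ^ 4 + (57024) * p ^ 5) * u ^ 3 + ((268800) + (-643328) * p ^ 1 + (616192) * p ^ 2 + (-295296) * p ^ 3 + (70816) * p ^ 4 + (-6800) * p ^ 5) * u ^ 4 + ((-8960) + (21888) * p ^ 1 + (-21376) * p ^ 2 + (10432) * p ^ 3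 + (-2544) * p ^ 4 + (248) * p ^ 5) * u ^ 5 + ((160) + (-400) * p ^ 1 + (400) * p ^ 2 + (-200) * p ^ 3 + (50) * p ^ 4 + (-5) * p ^ 5) * u ^ 6) := by
    field_simp
    ring
  have hfin := mul_pos (mul_pos hu0 hu0) hRR
  nlinarith [hid, hfin, hD, mul_pos (mul_pos hu0 hu0) hRR]

private lemma lower_poly {p s : ℝ} (hp1 : (3.141592:ℝ) < p) (hp2 : p < 3.141593)
    (hs0 : 0 < s) (hs1 : s ≤ 1.5707965) :
    2 * (1 + (p - 2) * (s * (p - s)) / (2 * p) + ((p - 2) * (s * (p - s)) / (2 * p)) ^ 2 / 2 +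
      ((p - 2) * (s * (p - s)) / (2 * p)) ^ 3 / 6 +
      5 * ((p - 2) * (s * (p - s)) / (2 * p)) ^ 4 / 96) <
      (p - 2) * (s - s ^ 3 / 6 + s ^ 5 / 120 - s ^ 7 / 5040) + 2 := by
  have hp0 : (0:ℝ) < p := by linarith
  have q2l : (9.8696002:ℝ) < p ^ 2 := by nlinarith [mul_pos (by linarith : (0:ℝ) < p - 3.141592) (by linarith : (0:ℝ) < p + 3.141592)]
  have q2u : p ^ 2 < 9.8696066 := by nlinarith [mul_pos (by linarith : (0:ℝ) < 3.141593 - p) (by linarith : (0:ℝ) < 3.141593 + p)]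
  have q3l : (31.0062573:ℝ) < p ^ 3 := by nlinarith [mul_pos (by linarith : (0:ℝ) < p - 3.141592) (by linarith : (0:ℝ) < p ^ 2 - 9.8696002)]
  have q3u : p ^ 3 < 31.0062870 := by nlinarith [mul_pos (by linarith : (0:ℝ) < 3.141593 - p) (by linarith : (0:ℝ) < p ^ 2 + 9.8696002), mul_pos (by linarith : (0:ℝ) < 9.8696066 - p ^ 2) (by linarith : (0:ℝ) < p)]
  have q4l : (97.4090099:ℝ) < p ^ 4 := by nlinarith [mul_pos (by linarith : (0:ℝ) < p - 3.141592) (by linarith : (0:ℝ) < p ^ 3 - 31.0062573)]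
  have q4u : p ^ 4 < 97.4091340 := by nlinarith [mul_pos (by linarith : (0:ℝ) < 3.141593 - p) (by linarith : (0:ℝ) < p ^ 3 + 31.0062573), mul_pos (by linarith : (0:ℝ) < 31.0062870 - p ^ 3) (by linarith : (0:ℝ) < p)]
  have q5l : (306.0193664:ℝ) < p ^ 5 := by nlinarith [mul_pos (by linarith : (0:ℝ) < p - 3.141592) (by linarith : (0:ℝ) < p ^ 4 - 97.4090099)]
  have q5u : p ^ 5 < 306.0198536 := by nlinarith [mul_pos (by linarith : (0:ℝ) < 3.141593 - p) (by linarith : (0:ℝ) < p ^ 4 + 97.4090099), mul_pos (by linarith : (0:ℝ) < 97.4091340 - p ^ 4) (by linarith : (0:ℝ) < p)]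
  have q6l : (961.3879935:ℝ) < p ^ 6 := by nlinarith [mul_pos (by linarith : (0:ℝ) < p - 3.141592) (by linarith : (0:ℝ) < p ^ 5 - 306.0193664)]
  have q6u : p ^ 6 < 961.3898297 := by nlinarith [mul_pos (by linarith : (0:ℝ) < 3.141593 - p) (by linarith : (0:ℝ) < p ^ 5 + 306.0193664), mul_pos (by linarith : (0:ℝ) < 306.0198536 - p ^ 5) (by linarith : (0:ℝ) < p)]
  have q7l : (3020.2888293:ℝ) < p ^ 7 := by nlinarith [mul_pos (by linarith : (0:ℝ) < p - 3.141592) (by linarith : (0:ℝ) < p ^ 6 - 961.3879935)]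
  have q7u : p ^ 7 < 3020.2955591 := by nlinarith [mul_pos (by linarith : (0:ℝ) < 3.141593 - p) (by linarith : (0:ℝ) < p ^ 6 + 961.3879935), mul_pos (by linarith : (0:ℝ) < 961.3898297 - p ^ 6) (by linarith : (0:ℝ) < p)]
  have q8l : (9488.5152238:ℝ) < p ^ 8 := by nlinarith [mul_pos (by linarith : (0:ℝ) < p - 3.141592) (by linarith : (0:ℝ) < p ^ 7 - 3020.2888293)]
  have q8u : p ^ 8 < 9488.5393862 := by nlinarith [mul_pos (by linarith : (0:ℝ) < 3.141593 - p) (by linarith : (0:ℝ) < p ^ 7 + 3020.2888293), mul_pos (by linarith : (0:ℝ) < 3020.2955591 - p ^ 7) (by linarith : (0:ℝ) < p)]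
  have hK0 : (14164256:ℝ) ≤ (-7741440) * p ^ 3 + (3870720) * p ^ 5 + (-967680) * p ^ 6 := by linarith
  have hK1 : (-16908431:ℝ) ≤ (7741440) * p ^ 3 + (-5160960) * p ^ 4 + (-645120) * p ^ 5 + (967680) * p ^ 6 + (-161280) * p ^ 7 := by linarith
  have hK2 : (5701807:ℝ) ≤ (-3870720) * p ^ 2 + (4435200) * p ^ 4 + (-2096640) * p ^ 5 + (-120960) * p ^ 6 + (201600) * p ^ 7 + (-25200) * p ^ 8 := by linarith
  have hK3 : (1789019:ℝ) ≤ (3870720) * p ^ 2 + (-4193280) * p ^ 3 + (-387072) * p ^ 4 + (1967616) * p ^ 5 + (-806400) * p ^ 6 + (100800) * p ^ 7 := by linarith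
  have hK4 : (-1781422:ℝ) ≤ (-1290240) * p ^ 1 + (-483840) * p ^ 2 + (3870720) * p ^ 3 + (-3467520) * p ^ 4 + (1209600) * p ^ 5 + (-151200) * p ^ 6 := by linarith
  have hK5 : (452313:ℝ) ≤ (1612800) * p ^ 1 + (-3225600) * p ^ 2 + (2419200) * p ^ 3 + (-804864) * p ^ 4 + (100032) * p ^ 5 := by linarith
  have hK6 : (-42812:ℝ) ≤ (-403200:ℝ) + (806400) * p ^ 1 + (-604800) * p ^ 2 + (201600) * p ^ 3 + (-25200) * p ^ 4 := by linarith
  have hBs : (0:ℝ) ≤ 1.5707965 - s := by linarith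
  have hGhat : (0:ℝ) < (14164256:ℝ) + (-16908431) * s ^ 1 + (5701807) * s ^ 2 + (1789019) * s ^ 3 + (-1781422) * s ^ 4 + (452313) * s ^ 5 + (-42812) * s ^ 6 := by
    nlinarith [mul_nonneg (pow_nonneg hs0.le 0) (pow_nonneg hBs 6), mul_nonneg (pow_nonneg hs0.le 1) (pow_nonneg hBs 5), mul_nonneg (pow_nonneg hs0.le 2) (pow_nonneg hBs 4), mul_nonneg (pow_nonneg hs0.le 3) (pow_nonneg hBs 3), mul_nonneg (pow_nonneg hs0.le 4) (pow_nonneg hBs 2), mul_nonneg (pow_nonneg hs0.le 5) (pow_nonneg hBs 1), mul_nonneg (pow_nonneg hs0.le 6) (pow_nonneg hBs 0)]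
  have hGG : (0:ℝ) < ((-7741440) * p ^ 3 + (3870720) * p ^ 5 + (-967680) * p ^ 6) + ((7741440) * p ^ 3 + (-5160960) * p ^ 4 + (-645120) * p ^ 5 + (967680) * p ^ 6 + (-161280) * p ^ 7) * s ^ 1 + ((-3870720) * p ^ 2 + (4435200) * p ^ 4 + (-2096640) * p ^ 5 + (-120960) * p ^ 6 + (201600) * p ^ 7 + (-25200) * p ^ 8) * s ^ 2 + ((3870720) * p ^ 2 + (-4193280) * p ^ 3 + (-387072) * p ^ 4 + (1967616) * p ^ 5 + (-806400) * p ^ 6 + (100800) * p ^ 7) * s ^ 3 + ((-1290240) * p ^ 1 + (-483840) * p ^ 2 + (3870720) * p ^ 3 + (-3467520) * p ^ 4 + (1209600) * p ^ 5 + (-151200) * p ^ 6) * s ^ 4 + ((1612800) * p ^ 1 + (-3225600) * p ^ 2 + (2419200) * p ^ 3 + (-804864) * p ^ 4 + (100032) * p ^ 5) * s ^ 5 + ((-403200) + (806400) * p ^ 1 + (-604800) * p ^ 2 + (201600) * p ^ 3 + (-25200) * p ^ 4) * s ^ 6 := by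
    nlinarith [hGhat, hK0,
      mul_le_mul_of_nonneg_left hK1 (pow_nonneg hs0.le 1),
      mul_le_mul_of_nonneg_left hK2 (pow_nonneg hs0.le 2),
      mul_le_mul_of_nonneg_left hK3 (pow_nonneg hs0.le 3),
      mul_le_mul_of_nonneg_left hK4 (pow_nonneg hs0.le 4),
      mul_le_mul_of_nonneg_left hK5 (pow_nonneg hs0.le 5),
      mul_le_mul_of_nonneg_left hK6 (pow_nonneg hs0.le 6)]
  have hD : (0:ℝ) < 3870720 * p ^ 4 := by positivity
  have hid : ((p - 2) * (s - s ^ 3 / 6 + s ^ 5 / 120 - s ^ 7 / 5040) + 2) * (3870720 * p ^ 4) -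
      (2 * (1 + (p - 2) * (s * (p - s)) / (2 * p) + ((p - 2) * (s * (p - s)) / (2 * p)) ^ 2 / 2 +
      ((p - 2) * (s * (p - s)) / (2 * p)) ^ 3 / 6 +
      5 * ((p - 2) * (s * (p - s)) / (2 * p)) ^ 4 / 96)) * (3870720 * p ^ 4) =
      s ^ 2 * (((-7741440) * p ^ 3 + (3870720) * p ^ 5 + (-967680) * p ^ 6) + ((7741440) * p ^ 3 + (-5160960) * p ^ 4 + (-645120) * p ^ 5 + (967680) * p ^ 6 + (-161280) * p ^ 7) * s ^ 1 + ((-3870720) * p ^ 2 + (4435200) * p ^ 4 + (-2096640) * p ^ 5 + (-120960) * p ^ 6 + (201600) * p ^ 7 + (-25200) * p ^ 8) * s ^ 2 + ((3870720) * p ^ 2 + (-4193280) * p ^ 3 + (-387072) * p ^ 4 + (1967616) * p ^ 5 + (-806400) * p ^ 6 + (100800) * p ^ 7) * s ^ 3 + ((-1290240) * p ^ 1 + (-483840) * p ^ 2 + (3870720) * p ^ 3 + (-3467520) * p ^ 4 + (1209600) * p ^ 5 + (-151200) * p ^ 6) * s ^ 4 + ((1612800) * p ^ 1 + (-3225600)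 * p ^ 2 + (2419200) * p ^ 3 + (-804864) * p ^ 4 + (100032) * p ^ 5) * s ^ 5 + ((-403200) + (806400) * p ^ 1 + (-604800) * p ^ 2 + (201600) * p ^ 3 + (-25200) * p ^ 4) * s ^ 6) := by
    field_simp
    ring
  nlinarith [hid, mul_pos (mul_pos hs0 hs0) hGG, hD]

private lemma upper_main {x : ℝ} (hx0 : 0 < x) (hx2 : x < π / 2) :
    ((π - 2) * Real.cos x + 2) * Real.exp ((π - 2) * x ^ 2 / (2 * π)) < π := by
  have hp1 : (3.141592:ℝ) < π := Real.pi_gt_d6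
  have hp2 : π < 3.141593 := Real.pi_lt_d6
  have hu0 : 0 < x ^ 2 := by positivity
  have hxlt : x < 1.5707965 := by linarith
  have hu1 : x ^ 2 ≤ 2.467412 := by nlinarith
  have ht0 : 0 ≤ (π - 2) * x ^ 2 / (2 * π) := by
    have h1 : 0 ≤ (π - 2) * x ^ 2 := mul_nonneg (by linarith) (sq_nonneg x)
    positivity
  have ht1 : (π - 2) * x ^ 2 / (2 * π) ≤ 1 := by
    rw [div_le_one (by linarith)]
    nlinarith
  have hexp := exp_ub ht0 ht1
  have hcos := t_c4 hx0.le
  have hA0 : 0 < (π - 2) * Real.cos x + 2 := by nlinarith [Real.neg_one_le_cos x]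
  have hA : (π - 2) * Real.cos x + 2 ≤
      (π - 2) * (1 - x ^ 2 / 2 + x ^ 4 / 24 - x ^ 6 / 720 + x ^ 8 / 40320) + 2 := by
    nlinarith [hcos]
  have hstep : ((π - 2) * Real.cos x + 2) * Real.exp ((π - 2) * x ^ 2 / (2 * π)) ≤
      ((π - 2) * (1 - x ^ 2 / 2 + x ^ 4 / 24 - x ^ 6 / 720 + x ^ 8 / 40320) + 2) *
      (1 + (π - 2) * x ^ 2 / (2 * π) + ((π - 2) * x ^ 2 / (2 * π)) ^ 2 / 2 +
        ((π - 2) * x ^ 2 / (2 * π)) ^ 3 / 6 + 5 * ((π - 2) * x ^ 2 / (2 * π)) ^ 4 / 96) :=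
    mul_le_mul hA hexp (Real.exp_pos _).le (by linarith)
  have hpoly := upper_poly (u := x ^ 2) hp1 hp2 hu0 hu1
  have heq : ((π - 2) * (1 - x ^ 2 / 2 + (x ^ 2) ^ 2 / 24 - (x ^ 2) ^ 3 / 720 +
      (x ^ 2) ^ 4 / 40320) + 2) =
      ((π - 2) * (1 - x ^ 2 / 2 + x ^ 4 / 24 - x ^ 6 / 720 + x ^ 8 / 40320) + 2) := by ring
  rw [heq] at hpoly
  linarith

private lemma lower_main {x : ℝ} (hx0 : 0 < x) (hx2 : x < π / 2) :
    2 * Real.exp ((π - 2) * (π ^ 2 / 4 - x ^ 2) / (2 * π)) < (π - 2) * Real.cos x + 2 := by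
  have hp1 : (3.141592:ℝ) < π := Real.pi_gt_d6
  have hp2 : π < 3.141593 := Real.pi_lt_d6
  have hs0 : 0 < π / 2 - x := by linarith
  have hs1 : π / 2 - x ≤ 1.5707965 := by linarith
  have harg : (π - 2) * (π ^ 2 / 4 - x ^ 2) / (2 * π) =
      (π - 2) * ((π / 2 - x) * (π - (π / 2 - x))) / (2 * π) := by ring
  rw [harg]
  have hT0 : 0 ≤ (π - 2) * ((π / 2 - x) * (π - (π / 2 - x))) / (2 * π) := by
    have h1 : 0 < (π - 2) * ((π / 2 - x) * (π - (π / 2 - x))) :=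
      mul_pos (by linarith) (mul_pos hs0 (by linarith))
    positivity
  have hT1 : (π - 2) * ((π / 2 - x) * (π - (π / 2 - x))) / (2 * π) ≤ 1 := by
    rw [div_le_one (by linarith)]
    nlinarith [sq_nonneg x, sq_nonneg (π / 2 - x)]
  have hexp := exp_ub hT0 hT1
  have hpoly := lower_poly hp1 hp2 hs0 hs1
  have hsin := t_s4 hs0.le
  have hcos : Real.sin (π / 2 - x) = Real.cos x := Real.sin_pi_div_two_sub x
  have hmul : (π - 2) * ((π / 2 - x) - (π / 2 - x) ^ 3 / 6 + (π / 2 - x) ^ 5 / 120 -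
      (π / 2 - x) ^ 7 / 5040) ≤ (π - 2) * Real.cos x := by
    rw [← hcos]
    exact mul_le_mul_of_nonneg_left hsin (by linarith)
  linarith

theorem stmt12 :
    (∀ x : ℝ, x ∈ Ioo 0 (π / 2) →
      Real.exp ((π ^ 2 + 8 * Real.log (2 / π) - 2 * π) / 8 - (π - 2) * x ^ 2 / (2 * π)) <
        ((π - 2) * Real.cos x + 2) / π ∧
      ((π - 2) * Real.cos x + 2) / π < Real.exp (0 - (π - 2) * x ^ 2 / (2 * π))) ∧
    (∀ a : ℝ,
      (∀ x : ℝ, x ∈ Ioo 0 (π / 2) →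
        Real.exp (a - (π - 2) * x ^ 2 / (2 * π)) < ((π - 2) * Real.cos x + 2) / π) →
      a ≤ (π ^ 2 + 8 * Real.log (2 / π) - 2 * π) / 8) ∧
    (∀ b : ℝ,
      (∀ x : ℝ, x ∈ Ioo 0 (π / 2) →
        ((π - 2) * Real.cos x + 2) / π < Real.exp (b - (π - 2) * x ^ 2 / (2 * π))) →
      0 ≤ b) := by
  have hπ0 : (0:ℝ) < π := Real.pi_pos
  refine ⟨?_, ?_, ?_⟩
  · rintro x ⟨hx0, hx2⟩
    constructor
    · have h := lower_main hx0 hx2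
      have hlog : (π ^ 2 + 8 * Real.log (2 / π) - 2 * π) / 8 - (π - 2) * x ^ 2 / (2 * π) =
          Real.log (2 / π) + (π - 2) * (π ^ 2 / 4 - x ^ 2) / (2 * π) := by
        field_simp
        ring
      rw [hlog, Real.exp_add, Real.exp_log (by positivity)]
      rw [div_mul_eq_mul_div, div_lt_div_iff₀ hπ0 hπ0]
      nlinarith [Real.exp_pos ((π - 2) * (π ^ 2 / 4 - x ^ 2) / (2 * π))]
    · have h := upper_main hx0 hx2
      have hE := Real.exp_pos ((π - 2) * x ^ 2 / (2 * π))
      rw [zero_sub, Real.exp_neg, div_lt_iff₀ hπ0, inv_mul_eq_div, lt_div_iff₀ hE]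
      exact h
  · intro a H
    have hhalf : (0:ℝ) < π / 2 := by linarith
    have hmem : Ioo (0:ℝ) (π / 2) ∈ 𝓝[<] (π / 2) :=
      Ioo_mem_nhdsLT_of_mem ⟨hhalf, le_refl _⟩
    have h1 : Filter.Tendsto (fun x : ℝ => Real.exp (a - (π - 2) * x ^ 2 / (2 * π)))
        (𝓝[<] (π / 2)) (𝓝 (Real.exp (a - (π - 2) * (π / 2) ^ 2 / (2 * π)))) := by
      apply Filter.Tendsto.mono_left _ nhdsWithin_le_nhds
      exact (Real.continuous_exp.comp (continuous_const.sub
        ((continuous_const.mul (continuous_pow 2)).div_const (2 * π)))).tendsto _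
    have h2 : Filter.Tendsto (fun x : ℝ => ((π - 2) * Real.cos x + 2) / π)
        (𝓝[<] (π / 2)) (𝓝 (((π - 2) * Real.cos (π / 2) + 2) / π)) := by
      apply Filter.Tendsto.mono_left _ nhdsWithin_le_nhds
      exact (((continuous_const.mul Real.continuous_cos).add continuous_const).div_const
        π).tendsto _
    have hev : ∀ᶠ x in 𝓝[<] (π / 2),
        Real.exp (a - (π - 2) * x ^ 2 / (2 * π)) ≤ ((π - 2) * Real.cos x + 2) / π :=
      Filter.eventually_of_mem hmem fun x hx => (H x hx).le
    have key := le_of_tendsto_of_tendsto h1 h2 hev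
    rw [Real.cos_pi_div_two] at key
    have key2 : Real.exp (a - (π - 2) * (π / 2) ^ 2 / (2 * π)) ≤ 2 / π := by
      have : ((π - 2) * 0 + 2) / π = 2 / π := by ring
      linarith [key, this.le]
    have h3 : a - (π - 2) * (π / 2) ^ 2 / (2 * π) ≤ Real.log (2 / π) :=
      (Real.le_log_iff_exp_le (by positivity)).2 key2
    have h4 : (π - 2) * (π / 2) ^ 2 / (2 * π) = (π ^ 2 - 2 * π) / 8 := by
      field_simp
      ring
    rw [h4] at h3
    linarith
  · intro b H
    have hhalf : (0:ℝ) < π / 2 := by linarith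
    have hmem : Ioo (0:ℝ) (π / 2) ∈ 𝓝[>] (0:ℝ) :=
      Ioo_mem_nhdsGT_of_mem ⟨le_refl _, hhalf⟩
    have h1 : Filter.Tendsto (fun x : ℝ => ((π - 2) * Real.cos x + 2) / π)
        (𝓝[>] (0:ℝ)) (𝓝 (((π - 2) * Real.cos 0 + 2) / π)) := by
      apply Filter.Tendsto.mono_left _ nhdsWithin_le_nhds
      exact (((continuous_const.mul Real.continuous_cos).add continuous_const).div_const
        π).tendsto _
    have h2 : Filter.Tendsto (fun x : ℝ => Real.exp (b - (π - 2) * x ^ 2 / (2 * π)))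
        (𝓝[>] (0:ℝ)) (𝓝 (Real.exp (b - (π - 2) * 0 ^ 2 / (2 * π)))) := by
      apply Filter.Tendsto.mono_left _ nhdsWithin_le_nhds
      exact (Real.continuous_exp.comp (continuous_const.sub
        ((continuous_const.mul (continuous_pow 2)).div_const (2 * π)))).tendsto _
    have hev : ∀ᶠ x in 𝓝[>] (0:ℝ),
        ((π - 2) * Real.cos x + 2) / π ≤ Real.exp (b - (π - 2) * x ^ 2 / (2 * π)) :=
      Filter.eventually_of_mem hmem fun x hx => (H x hx).le
    have key := le_of_tendsto_of_tendsto h1 h2 hev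
    rw [Real.cos_zero] at key
    have hone : ((π - 2) * 1 + 2) / π = 1 := by field_simp; ring
    have harg : b - (π - 2) * (0:ℝ) ^ 2 / (2 * π) = b := by ring
    rw [hone, harg] at key
    have : Real.exp 0 ≤ Real.exp b := by rwa [Real.exp_zero]
    exact Real.exp_le_exp.1 this
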